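/- Let $F$ be a totally real number field with class number $1$, let $p$ be a rational prime with $p \equiv 3 \pmod 4$ that remains inert in $F$, and let $K = F(\sqrt{-p})$. Then the set $\{1, (1+\sqrt{-p})/2\}$ is an $\mathcal{O}_F$-integral basis of $\mathcal{O}_K$, i.e., $\mathcal{O}_K = \mathcal{O}_F \oplus \mathcal{O}_F \cdot \frac{1+\sqrt{-p}}{2}$. -/

import Mathlib

open NumberField

/-- if `F` is a totally real number field with class number 1, `p ≡ 3 (mod 4)`
is a rational prime that remains inert in `F`, and `K = F(√-p)`, then
`{1, (1+√-p)/2}` is an `𝓞_F`-integral basis of `𝓞_K`: every element of `𝓞_K` is uniquely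
`a + b·(1+√-p)/2` with `a, b ∈ 𝓞_F`. -/
theorem integral_basis_of_imaginary_quadratic_ext {F K : Type*}
    [Field F] [NumberField F] [Field K] [NumberField K] [Algebra F K]
    (htr : ∀ φ : F →+* ℂ, ComplexEmbedding.IsReal φ)
    (hcl : classNumber F = 1)
    (p : ℕ) (hp : p.Prime) (hp4 : p % 4 = 3)
    (hinert : (Ideal.span {(p : RingOfIntegers F)}).IsPrime)
    (α : K) (hα : α ^ 2 = -(p : K))
    (hadj : Algebra.adjoin F {α} = ⊤)
    (hdeg : Module.finrank F K = 2) :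
    ∃ ω : RingOfIntegers K, (ω : K) = (1 + α) / 2 ∧
      ∀ x : RingOfIntegers K, ∃! c : RingOfIntegers F × RingOfIntegers F,
        (x : K) = algebraMap F K (c.1 : F) + algebraMap F K (c.2 : F) * (ω : K) := by
  classical
  have hFD : FiniteDimensional F K :=
    FiniteDimensional.of_finrank_pos (by rw [hdeg]; norm_num)
  have hinj : Function.Injective (algebraMap F K) := (algebraMap F K).injective
  have hpF : (p : F) ≠ 0 := Nat.cast_ne_zero.mpr hp.ne_zero
  -- key linear independence of 1, α
  have key : ∀ s t : F, algebraMap F K s + algebraMap F K t * α = 0 → s = 0 ∧ t = 0 := by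
    intro s t h
    by_cases ht : t = 0
    · subst ht
      simp only [map_zero, zero_mul, add_zero] at h
      exact ⟨hinj (by simpa using h), rfl⟩
    · exfalso
      have htK : algebraMap F K t ≠ 0 := fun hh => ht (hinj (by simpa using hh))
      have hαb : α = algebraMap F K (-(s / t)) := by
        rw [map_neg, map_div₀]
        field_simp
        linear_combination h
      have hαmem : α ∈ (⊥ : Subalgebra F K) := by
        rw [hαb, Algebra.mem_bot]; exact ⟨_, rfl⟩
      have hbot : (⊥ : Subalgebra F K) = ⊤ := by
        rw [eq_top_iff, ← hadj]
        exact Algebra.adjoin_le (Set.singleton_subset_iff.mpr hαmem)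
      have h1 := Subalgebra.bot_eq_top_iff_finrank_eq_one.mp hbot
      rw [hdeg] at h1
      omega
  -- the basis {1, α}
  have hli : LinearIndependent F ![(1 : K), α] := by
    rw [LinearIndependent.pair_iff]
    intro s t hst
    refine key s t ?_
    rw [Algebra.smul_def, Algebra.smul_def, mul_one] at hst
    exact hst
  have hcard : Fintype.card (Fin 2) = Module.finrank F K := by simp [hdeg]
  set B : Module.Basis (Fin 2) F K := basisOfLinearIndependentOfCardEqFinrank hli hcard with hBdef
  have hB0 : B 0 = 1 := by rw [hBdef, coe_basisOfLinearIndependentOfCardEqFinrank]; rfl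
  have hB1 : B 1 = α := by rw [hBdef, coe_basisOfLinearIndependentOfCardEqFinrank]; rfl
  have hrep : ∀ z : K, z = algebraMap F K (B.repr z 0) + algebraMap F K (B.repr z 1) * α := by
    intro z
    have h := B.sum_repr z
    rw [Fin.sum_univ_two, hB0, hB1, Algebra.smul_def, Algebra.smul_def, mul_one] at h
    exact h.symm
  -- trace of α is 0
  have htrα : Algebra.trace F K α = 0 := by
    rw [Algebra.trace_eq_matrix_trace B, Matrix.trace, Fin.sum_univ_two]
    have e0 : α * B 0 = B 1 := by rw [hB0, hB1, mul_one]
    have e1 : α * B 1 = (-(p : F)) • B 0 := by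
      rw [hB0, hB1, Algebra.smul_def, mul_one, ← sq, hα]
      simp
    rw [Matrix.diag_apply, Matrix.diag_apply, Algebra.leftMulMatrix_eq_repr_mul,
      Algebra.leftMulMatrix_eq_repr_mul, e0, e1, map_smul, B.repr_self, B.repr_self]
    simp
  -- trace of algebraMap
  have htralg : ∀ c : F, Algebra.trace F K (algebraMap F K c) = 2 * c := by
    intro c
    rw [Algebra.trace_algebraMap, hdeg, nsmul_eq_mul]
    norm_num
  -- trace linear combination
  have htr_lin : ∀ u v : F,
      Algebra.trace F K (algebraMap F K u + algebraMap F K v * α) = 2 * u := by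
    intro u v
    rw [map_add, ← Algebra.smul_def, LinearMap.map_smul, htrα, smul_zero, add_zero, htralg]
  -- α is integral over ℤ
  have hαint : IsIntegral ℤ α := by
    refine ⟨Polynomial.X ^ 2 + Polynomial.C (p : ℤ), Polynomial.monic_X_pow_add ?_, ?_⟩
    · exact lt_of_le_of_lt Polynomial.degree_C_le (by norm_num)
    · simp [hα]
  have htwoint : IsIntegral ℤ (2 : K) := by
    simpa using (isIntegral_algebraMap : IsIntegral ℤ (algebraMap ℤ K 2))
  -- ω = (1+α)/2 is integral over ℤ
  set w : K := (1 + α) / 2 with hwdef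
  obtain ⟨k, hk⟩ : ∃ k : ℕ, p + 1 = 4 * k := ⟨(p + 1) / 4, by omega⟩
  have hpk : (p : K) + 1 = 4 * (k : K) := by exact_mod_cast congrArg (Nat.cast : ℕ → K) hk
  have hw2 : w ^ 2 - w + (k : K) = 0 := by
    rw [hwdef]
    field_simp
    linear_combination hα - hpk
  have hwint : IsIntegral ℤ w := by
    refine ⟨Polynomial.X ^ 2 + (Polynomial.C (k : ℤ) - Polynomial.X),
      Polynomial.monic_X_pow_add ?_, ?_⟩
    · refine lt_of_le_of_lt (Polynomial.degree_sub_le _ _) ?_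
      rw [Polynomial.degree_X]
      exact max_lt (lt_of_le_of_lt Polynomial.degree_C_le (by norm_num)) (by norm_num)
    · have h2 : (Polynomial.aeval w) (Polynomial.X ^ 2 + (Polynomial.C (k : ℤ) - Polynomial.X))
          = w ^ 2 - w + (k : K) := by
        simp only [map_add, map_sub, map_pow, Polynomial.aeval_X, Polynomial.aeval_C]
        push_cast
        ring
      rw [Polynomial.aeval_def] at h2
      rw [h2, hw2]
  refine ⟨⟨w, hwint⟩, rfl, ?_⟩
  intro x
  set u : F := B.repr (x : K) 0 with hudef
  set v : F := B.repr (x : K) 1 with hvdef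
  have hx : (x : K) = algebraMap F K u + algebraMap F K v * α := hrep _
  -- trace(x) = 2u is integral
  have hs : IsIntegral ℤ (2 * u) := by
    have h := Algebra.isIntegral_trace (L := F) (x := (x : K)) x.isIntegral_coe
    rwa [hx, htr_lin] at h
  -- trace(x·α) = -(2pv) is integral
  have hxα_int : IsIntegral ℤ ((x : K) * α) := x.isIntegral_coe.mul hαint
  have hr : IsIntegral ℤ (2 * ((p : F) * v)) := by
    have h := Algebra.isIntegral_trace (L := F) (x := (x : K) * α) hxα_int
    have he : (x : K) * α = algebraMap F K (-((p : F) * v)) + algebraMap F K u * α := by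
      rw [hx, map_neg, map_mul, map_natCast]
      linear_combination (algebraMap F K v) * hα
    rw [he, htr_lin] at h
    have h2 := h.neg
    rwa [← mul_neg, neg_neg] at h2
  -- integrality of -(p (2v)²)
  have hg : IsIntegral ℤ (-((p : F) * (2 * v) ^ 2)) := by
    have hy : algebraMap F K (2 * v) * α = 2 * (x : K) - algebraMap F K (2 * u) := by
      rw [hx, map_mul, map_mul, map_ofNat]
      ring
    have hyint : IsIntegral ℤ (algebraMap F K (2 * v) * α) := by
      rw [hy]
      exact (htwoint.mul x.isIntegral_coe).sub (hs.map (IsScalarTower.toAlgHom ℤ F K))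
    have hsq : (algebraMap F K (2 * v) * α) ^ 2 = algebraMap F K (-((p : F) * (2 * v) ^ 2)) := by
      rw [mul_pow, hα]
      simp only [map_neg, map_mul, map_pow, map_natCast]
      ring
    rw [← isIntegral_algebraMap_iff hinj, ← hsq]
    exact hyint.pow 2
  -- the elements r and g of 𝓞 F
  set r : RingOfIntegers F := ⟨2 * ((p : F) * v), hr⟩ with hrdef
  set g : RingOfIntegers F := ⟨-((p : F) * (2 * v) ^ 2), hg⟩ with hgdef
  have hrg : r * r = (p : RingOfIntegers F) * (-g) := by
    refine RingOfIntegers.coe_injective ?_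
    rw [map_mul, map_mul, map_neg, map_natCast]
    show (2 * ((p : F) * v)) * (2 * ((p : F) * v)) = (p : F) * (-(-((p : F) * (2 * v) ^ 2)))
    ring
  have hp0' : (p : RingOfIntegers F) ≠ 0 := by
    intro h0
    apply hpF
    have := congrArg (algebraMap (RingOfIntegers F) F) h0
    rwa [map_natCast, map_zero] at this
  have hprime : Prime (p : RingOfIntegers F) := (Ideal.span_singleton_prime hp0').mp hinert
  have hdvd : (p : RingOfIntegers F) ∣ r := by
    rcases hprime.2.2 r r ⟨-g, hrg⟩ with h | h <;> exact h
  obtain ⟨t, htt⟩ := hdvd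
  have ht2v : (t : F) = 2 * v := by
    have h1 : (r : F) = (p : F) * (t : F) := by
      rw [htt, RingOfIntegers.coe_eq_algebraMap, map_mul, map_natCast]
    have h2 : (p : F) * (t : F) = (p : F) * (2 * v) := by
      rw [← h1]
      show 2 * ((p : F) * v) = (p : F) * (2 * v)
      ring
    exact mul_left_cancel₀ hpF h2
  -- the element a = u - v
  have haK : (x : K) - algebraMap F K (t : F) * w = algebraMap F K (u - v) := by
    rw [hx, ht2v, hwdef, map_sub, map_mul, map_ofNat]
    field_simp
    ring
  have haint : IsIntegral ℤ ((x : K) - algebraMap F K (t : F) * w) :=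
    x.isIntegral_coe.sub ((t.isIntegral_coe.map (IsScalarTower.toAlgHom ℤ F K)).mul hwint)
  have hauv : IsIntegral ℤ (u - v) := (isIntegral_algebraMap_iff hinj).mp (haK ▸ haint)
  refine ⟨(⟨u - v, hauv⟩, t), ?_, ?_⟩
  · show (x : K) = algebraMap F K (u - v) + algebraMap F K (t : F) * w
    rw [← haK]
    ring
  · rintro ⟨a', t'⟩ h'
    have hc : (x : K) = algebraMap F K (u - v) + algebraMap F K (t : F) * w := by
      rw [← haK]; ring
    have heq : algebraMap F K (a' : F) + algebraMap F K (t' : F) * w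
        = algebraMap F K (u - v) + algebraMap F K (t : F) * w := h'.symm.trans hc
    have h2 : algebraMap F K (2 * ((a' : F) - (u - v)) + ((t' : F) - (t : F)))
        + algebraMap F K ((t' : F) - (t : F)) * α = 0 := by
      rw [map_add, map_mul, map_sub, map_sub, map_sub, map_ofNat, hwdef] at *
      field_simp at heq ⊢
      linear_combination heq
    obtain ⟨h3, h4⟩ := key _ _ h2
    have ht' : (t' : F) = (t : F) := sub_eq_zero.mp h4
    have ha' : (a' : F) = u - v := by
      rw [h4, add_zero] at h3
      have h5 : (a' : F) - (u - v) = 0 := by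
        have h2F : (2 : F) ≠ 0 := two_ne_zero
        exact (mul_eq_zero.mp h3).resolve_left h2F
      exact sub_eq_zero.mp h5
    refine Prod.ext ?_ ?_
    · exact RingOfIntegers.ext ha'
    · exact RingOfIntegers.ext ht'
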